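/- Let p ≥ 2, δ > (p-1)/p, and for m ∈ ℕ let U(m,δ) ∩ [M, p^m + M) be counted where U(m,δ) = {N ∈ ℕ : #{k ≤ m−1 : C̃^k(N) ≢ 0 mod p} ≤ δm} for the map C̃(N) = N/p if p∣N, else (qN + r(N mod p))/p (under the assumptions gcd(p,q)=1, p ∣ qj+r(j), qj+r(j) ≥ 1). Then #(U(m,δ) ∩ [M, p^m + M)) = Σ_{k=0}^{⌊mδ⌋} C(m,k)(p−1)^k for every M ∈ ℕ, and hence #(U(m,δ) ∩ [M, p^m+M)) = (1 + o_m(1))·p^m. -/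

import Mathlib

open scoped Classical
open Finset Filter


private lemma keyCt (p q : ℕ) (hp : 2 ≤ p)
    (r : ℕ → ℤ) (hr1 : ∀ j, 1 ≤ j → j < p → 1 ≤ q * j + r j)
    (hr2 : ∀ j, 1 ≤ j → j < p → (p : ℤ) ∣ q * j + r j)
    (Ct : ℕ → ℕ)
    (hCt : ∀ N, Ct N = if N % p = 0 then N / p else ((q * N : ℤ) + r (N % p)).toNat / p)
    (N : ℕ) :
    (p : ℤ) * Ct N = if N % p = 0 then (N : ℤ) else q * N + r (N % p) := by
  by_cases h : N % p = 0
  · simp only [h, if_true]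
    rw [hCt, if_pos h]
    have := Nat.mul_div_cancel' (Nat.dvd_of_mod_eq_zero h)
    exact_mod_cast congrArg (fun n : ℕ => (n : ℤ)) this
  · simp only [h, if_false]
    set j := N % p with hj
    have hj1 : 1 ≤ j := Nat.one_le_iff_ne_zero.2 h
    have hjp : j < p := Nat.mod_lt _ (by omega)
    have hNj : (N : ℤ) = p * ((N / p : ℕ) : ℤ) + j := by
      conv_lhs => rw [← Nat.div_add_mod N p]
      push_cast [Nat.cast_div_le]
      rfl
    set t : ℤ := q * N + r j with ht
    have htt : t = ((q : ℤ) * ((N / p : ℕ) : ℤ)) * p + ((q : ℤ) * j + r j) := by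
      rw [ht, hNj]; ring
    have hq1 := hr1 j hj1 hjp
    have hpos : 0 ≤ t := by
      have h0 : (0 : ℤ) ≤ ((q : ℤ) * ((N / p : ℕ) : ℤ)) * p := by positivity
      linarith [htt]
    have hdvd : (p : ℤ) ∣ t := by
      rw [htt]
      exact dvd_add (dvd_mul_left _ _) (hr2 j hj1 hjp)
    rw [hCt, if_neg h]
    have h2 : ((t.toNat : ℤ)) = t := Int.toNat_of_nonneg hpos
    have hd2 : p ∣ t.toNat := by
      have : (p : ℤ) ∣ (t.toNat : ℤ) := h2 ▸ hdvd
      exact_mod_cast this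
    have h3 := Nat.mul_div_cancel' hd2
    calc (p : ℤ) * ((t.toNat / p : ℕ) : ℤ) = ((p * (t.toNat / p) : ℕ) : ℤ) := by push_cast; ring
    _ = (t.toNat : ℤ) := by rw [h3]
    _ = t := h2

private lemma backCt (p q : ℕ) (hp : 2 ≤ p) (hpq : Nat.Coprime p q)
    (r : ℕ → ℤ) (hr1 : ∀ j, 1 ≤ j → j < p → 1 ≤ q * j + r j)
    (hr2 : ∀ j, 1 ≤ j → j < p → (p : ℤ) ∣ q * j + r j)
    (Ct : ℕ → ℕ)
    (hCt : ∀ N, Ct N = if N % p = 0 then N / p else ((q * N : ℤ) + r (N % p)).toNat / p)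
    (m N N' : ℕ) (hmod : N % p = N' % p) (hct : Ct N ≡ Ct N' [MOD p ^ m]) :
    N ≡ N' [MOD p ^ (m + 1)] := by
  have e := keyCt p q hp r hr1 hr2 Ct hCt N
  have e' := keyCt p q hp r hr1 hr2 Ct hCt N'
  rw [← hmod] at e'
  have hct' : (Ct N : ℤ) ≡ (Ct N' : ℤ) [ZMOD ((p ^ m : ℕ) : ℤ)] := Int.natCast_modEq_iff.2 hct
  have hmul : (p : ℤ) * Ct N ≡ (p : ℤ) * Ct N' [ZMOD (p : ℤ) * ((p ^ m : ℕ) : ℤ)] :=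
    hct'.mul_left' (c := (p : ℤ))
  have hmod2 : ((p : ℤ) * ((p ^ m : ℕ) : ℤ)) = ((p ^ (m + 1) : ℕ) : ℤ) := by push_cast; ring
  rw [hmod2] at hmul
  rw [← Int.natCast_modEq_iff]
  by_cases h : N % p = 0
  · rw [if_pos h] at e e'
    rwa [e, e'] at hmul
  · rw [if_neg h] at e e'
    rw [e, e'] at hmul
    have hq : (q : ℤ) * N ≡ (q : ℤ) * N' [ZMOD ((p ^ (m + 1) : ℕ) : ℤ)] :=
      hmul.add_right_cancel' _
    have hco : IsCoprime ((p ^ (m + 1) : ℕ) : ℤ) (q : ℤ) := by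
      rw [Nat.isCoprime_iff_coprime]
      exact hpq.pow_left _
    have hdvd : ((p ^ (m + 1) : ℕ) : ℤ) ∣ (q : ℤ) * ((N' : ℤ) - N) := by
      have h4 := Int.ModEq.dvd hq
      have : (q : ℤ) * N' - (q : ℤ) * N = (q : ℤ) * ((N' : ℤ) - N) := by ring
      rwa [this] at h4
    have := hco.dvd_of_dvd_mul_left hdvd
    exact Int.modEq_iff_dvd.2 this

private lemma injCt (p q : ℕ) (hp : 2 ≤ p) (hpq : Nat.Coprime p q)
    (r : ℕ → ℤ) (hr1 : ∀ j, 1 ≤ j → j < p → 1 ≤ q * j + r j)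
    (hr2 : ∀ j, 1 ≤ j → j < p → (p : ℤ) ∣ q * j + r j)
    (Ct : ℕ → ℕ)
    (hCt : ∀ N, Ct N = if N % p = 0 then N / p else ((q * N : ℤ) + r (N % p)).toNat / p) :
    ∀ m N N', (∀ k < m, Ct^[k] N % p = Ct^[k] N' % p) → N % p ^ m = N' % p ^ m := by
  intro m
  induction m with
  | zero => intro N N' _; simp [Nat.mod_one]
  | succ m ih =>
    intro N N' h
    have h0 : N % p = N' % p := by simpa using h 0 (Nat.succ_pos m)
    have hc : Ct N % p ^ m = Ct N' % p ^ m := by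
      refine ih (Ct N) (Ct N') (fun k hk => ?_)
      have := h (k + 1) (by omega)
      simpa [Function.iterate_succ_apply] using this
    exact backCt p q hp hpq r hr1 hr2 Ct hCt m N N' h0 hc

section Aux
variable (p q : ℕ) (hp : 2 ≤ p) (hq : 2 ≤ q) (hpq : Nat.Coprime p q)
    (r : ℕ → ℤ) (hr1 : ∀ j, 1 ≤ j → j < p → 1 ≤ q * j + r j)
    (hr2 : ∀ j, 1 ≤ j → j < p → (p : ℤ) ∣ q * j + r j)
    (Ct : ℕ → ℕ)
    (hCt : ∀ N, Ct N = if N % p = 0 then N / p else ((q * N : ℤ) + r (N % p)).toNat / p)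
    (δ : ℝ) (hδ : ((p : ℝ) - 1) / p < δ)

include hp hδ in
private theorem stmt12_part1 (hinjCt : ∀ m N N', (∀ k < m, Ct^[k] N % p = Ct^[k] N' % p) →
      N % p ^ m = N' % p ^ m)
    (m M : ℕ) :
    ((Finset.Ico M (p ^ m + M)).filter (fun N =>
      (((Finset.range m).filter (fun k => Ct^[k] N % p ≠ 0)).card : ℝ) ≤ δ * m)).card
      = ∑ k ∈ Finset.range (⌊δ * m⌋₊ + 1), Nat.choose m k * (p - 1) ^ k := by
  haveI : NeZero p := ⟨by omega⟩
  have hp0 : 0 < p := by omega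
  set t := ⌊δ * m⌋₊ with htdef
  set φ : ℕ → (Fin m → ZMod p) := fun N k => ((Ct^[(k : ℕ)] N : ℕ) : ZMod p) with hφ
  set wt : (Fin m → ZMod p) → ℕ := fun v => (Finset.univ.filter (fun k => v k ≠ 0)).card
    with hwt
  -- counting conditions agree
  have hcount : ∀ N : ℕ,
      ((Finset.range m).filter (fun k => Ct^[k] N % p ≠ 0)).card = wt (φ N) := by
    intro N
    have hrfl : wt (φ N) = (Finset.univ.filter
        (fun k : Fin m => ((Ct^[(k : ℕ)] N : ℕ) : ZMod p) ≠ 0)).card := rfl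
    rw [hrfl, Finset.card_filter, Finset.card_filter]
    rw [← Fin.sum_univ_eq_sum_range (fun k => if Ct^[k] N % p ≠ 0 then 1 else 0)]
    refine Finset.sum_congr rfl (fun k _ => ?_)
    refine if_congr ?_ rfl rfl
    simp only [Ne, ZMod.natCast_eq_zero_iff, Nat.dvd_iff_mod_eq_zero]
  -- the filtered set written via φ
  have hUcard : ((Finset.Ico M (p ^ m + M)).filter (fun N =>
        (((Finset.range m).filter (fun k => Ct^[k] N % p ≠ 0)).card : ℝ) ≤ δ * m))
      = (Finset.Ico M (p ^ m + M)).filter (fun N => ((wt (φ N) : ℝ)) ≤ δ * m) := by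
    refine Finset.filter_congr (fun N _ => ?_)
    rw [hcount N]
  -- injectivity of φ on the interval
  have hinj : Set.InjOn φ (Finset.Ico M (p ^ m + M)) := by
    intro a ha b hb hab
    simp only [Finset.coe_Ico, Set.mem_Ico] at ha hb
    have hmods : a % p ^ m = b % p ^ m := by
      refine hinjCt m a b (fun k hk => ?_)
      have h1 : φ a ⟨k, hk⟩ = φ b ⟨k, hk⟩ := by rw [hab]
      rw [hφ] at h1
      exact (ZMod.natCast_eq_natCast_iff' _ _ _).1 h1
    rcases le_total a b with hle | hle
    · have hd := (Nat.modEq_iff_dvd' hle).1 hmods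
      have hsz := Nat.eq_zero_of_dvd_of_lt hd (by omega : b - a < p ^ m)
      omega
    · have hd := (Nat.modEq_iff_dvd' hle).1 hmods.symm
      have hsz := Nat.eq_zero_of_dvd_of_lt hd (by omega : a - b < p ^ m)
      omega
  have hcardIco : (Finset.Ico M (p ^ m + M)).card = p ^ m := by
    rw [Nat.card_Ico]; omega
  have himg : (Finset.Ico M (p ^ m + M)).image φ = Finset.univ := by
    refine Finset.eq_univ_of_card _ ?_
    rw [Finset.card_image_of_injOn hinj, hcardIco]
    simp [ZMod.card]
  -- step 1 : transport count to functions
  have step1 : ((Finset.Ico M (p ^ m + M)).filter (fun N => ((wt (φ N) : ℝ)) ≤ δ * m)).card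
      = (Finset.univ.filter (fun v : Fin m → ZMod p => ((wt v : ℝ)) ≤ δ * m)).card := by
    rw [← himg, Finset.filter_image, Finset.card_image_of_injOn
      (hinj.mono (by exact_mod_cast Finset.filter_subset _ _))]
  -- condition in ℕ
  have hδ0 : 0 ≤ δ * m := by
    have h1 : (0 : ℝ) ≤ ((p : ℝ) - 1) / p := by
      have : (2 : ℝ) ≤ p := by exact_mod_cast hp
      apply div_nonneg <;> linarith
    have : 0 ≤ δ := le_of_lt (lt_of_le_of_lt h1 hδ)
    positivity
  have hcond : (Finset.univ.filter (fun v : Fin m → ZMod p => ((wt v : ℝ)) ≤ δ * m))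
      = Finset.univ.filter (fun v : Fin m → ZMod p => wt v ≤ t) := by
    refine Finset.filter_congr (fun v _ => ?_)
    exact (Nat.le_floor_iff hδ0).symm
  -- step 2 : fiberwise by weight
  have step2 : (Finset.univ.filter (fun v : Fin m → ZMod p => wt v ≤ t)).card
      = ∑ j ∈ Finset.range (t + 1),
        (Finset.univ.filter (fun v : Fin m → ZMod p => wt v = j)).card := by
    rw [Finset.card_eq_sum_card_fiberwise (f := wt) (t := Finset.range (t + 1))
      (fun v hv => by simp only [Finset.mem_coe, Finset.mem_filter] at hv; simp; omega)]
    refine Finset.sum_congr rfl (fun j hj => ?_)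
    simp only [Finset.mem_range] at hj
    congr 1
    ext v
    simp only [Finset.mem_filter, Finset.mem_univ, true_and, Finset.filter_filter]
    constructor
    · rintro ⟨_, h2⟩; exact h2
    · intro h2; exact ⟨by omega, h2⟩
  -- step 3 : count functions of given weight
  have step3 : ∀ j, (Finset.univ.filter (fun v : Fin m → ZMod p => wt v = j)).card
      = Nat.choose m j * (p - 1) ^ j := by
    intro j
    set Φ : (Fin m → ZMod p) → Finset (Fin m) :=
      fun v => Finset.univ.filter (fun k => v k ≠ 0) with hΦ
    rw [Finset.card_eq_sum_card_fiberwise (f := Φ) (t := Finset.univ.powersetCard j)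
      (fun v hv => by
        simp only [Finset.mem_coe, Finset.mem_filter] at hv
        rw [Finset.mem_coe, Finset.mem_powersetCard]
        exact ⟨Finset.subset_univ _, hv.2⟩)]
    have hfib : ∀ A ∈ Finset.univ.powersetCard j,
        ((Finset.univ.filter (fun v : Fin m → ZMod p => wt v = j)).filter
          (fun v => Φ v = A)).card = (p - 1) ^ j := by
      intro A hA
      rw [Finset.mem_powersetCard] at hA
      have h1 : ((Finset.univ.filter (fun v : Fin m → ZMod p => wt v = j)).filter
            (fun v => Φ v = A))
          = Fintype.piFinset (fun k => if k ∈ A then ({0}ᶜ : Finset (ZMod p)) else {0}) := by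
        ext v
        simp only [Finset.mem_filter, Finset.mem_univ, true_and, Fintype.mem_piFinset]
        constructor
        · rintro ⟨hwv, hΦv⟩
          intro k
          by_cases hk : k ∈ A
          · simp only [hk, if_true, Finset.mem_compl, Finset.mem_singleton]
            have : k ∈ Φ v := hΦv ▸ hk
            simpa [hΦ] using this
          · simp only [hk, if_false, Finset.mem_singleton]
            have : k ∉ Φ v := hΦv ▸ hk
            simpa [hΦ] using this
        · intro hk
          have hΦA : Φ v = A := by
            ext k
            specialize hk k
            by_cases hkA : k ∈ A
            · simp only [hkA, if_true, Finset.mem_compl, Finset.mem_singleton] at hk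
              simp [hΦ, hk, hkA]
            · simp only [hkA, if_false, Finset.mem_singleton] at hk
              simp [hΦ, hk, hkA]
          exact ⟨(congrArg Finset.card hΦA).trans hA.2, hΦA⟩
      rw [h1, Fintype.card_piFinset]
      have h2 : ∀ k : Fin m,
          ((if k ∈ A then ({0}ᶜ : Finset (ZMod p)) else {0}).card)
            = if k ∈ A then p - 1 else 1 := by
        intro k
        by_cases hk : k ∈ A <;> simp [hk, Finset.card_compl, ZMod.card]
      rw [Finset.prod_congr rfl (fun k _ => h2 k)]
      rw [Finset.prod_ite, Finset.prod_const, Finset.prod_const, one_pow, mul_one]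
      congr 1
      rw [← hA.2]
      congr 1
      ext k
      simp
    rw [Finset.sum_congr rfl hfib, Finset.sum_const, Finset.card_powersetCard,
      Finset.card_univ, Fintype.card_fin, smul_eq_mul]
  rw [hUcard, step1, hcond, step2]
  exact Finset.sum_congr rfl (fun j _ => step3 j)


end Aux


private theorem stmt12_part2 (p : ℕ) (hp : 2 ≤ p) (δ : ℝ) (hδ : ((p : ℝ) - 1) / p < δ)
    (a : ℕ → ℕ)
    (ha : ∀ m : ℕ, a m = ∑ k ∈ Finset.range (⌊δ * m⌋₊ + 1), Nat.choose m k * (p - 1) ^ k) :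
    Filter.Tendsto (fun m : ℕ => ((a m : ℝ)) / (p : ℝ) ^ m) Filter.atTop (nhds 1) := by
  have hpR : (2 : ℝ) ≤ p := by exact_mod_cast hp
  have hp0 : (0 : ℝ) < p := by linarith
  have hδpos : 0 < δ := lt_of_le_of_lt (by apply div_nonneg <;> linarith) hδ
  -- choose x > 1 with 1 + (p-1)x < p x^δ
  obtain ⟨x, hx1, hxlt⟩ : ∃ x : ℝ, 1 < x ∧ 1 + ((p : ℝ) - 1) * x < p * x ^ δ := by
    set f : ℝ → ℝ := fun y => p * y ^ δ - (((p : ℝ) - 1) * y + 1) with hf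
    have hf1 : f 1 = 0 := by simp [hf, Real.one_rpow]
    have hderiv : HasDerivAt f ((p : ℝ) * δ - ((p : ℝ) - 1)) 1 := by
      have h1 : HasDerivAt (fun y : ℝ => y ^ δ) (δ * (1 : ℝ) ^ (δ - 1)) 1 :=
        Real.hasDerivAt_rpow_const (Or.inl one_ne_zero)
      have h1' : HasDerivAt (fun y : ℝ => (p : ℝ) * y ^ δ) ((p : ℝ) * δ) 1 := by
        have := h1.const_mul (p : ℝ)
        simpa [Real.one_rpow, mul_comm, mul_assoc, mul_left_comm] using this
      have h2 : HasDerivAt (fun y : ℝ => ((p : ℝ) - 1) * y + 1) ((p : ℝ) - 1) 1 := by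
        simpa using ((hasDerivAt_id (1 : ℝ)).const_mul ((p : ℝ) - 1)).add_const 1
      exact h1'.sub h2
    have hpos : 0 < (p : ℝ) * δ - ((p : ℝ) - 1) := by
      have := (div_lt_iff₀ hp0).1 hδ
      linarith
    rw [hasDerivAt_iff_tendsto_slope] at hderiv
    have hev : ∀ᶠ y in nhdsWithin 1 (Set.Ioi 1), 0 < slope f 1 y :=
      (hderiv.mono_left (nhdsWithin_mono 1 (fun y hy => ne_of_gt hy))).eventually
        (eventually_gt_nhds hpos)
    obtain ⟨y, hy0, hy1⟩ := (hev.and eventually_mem_nhdsWithin).exists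
    rw [Set.mem_Ioi] at hy1
    refine ⟨y, hy1, ?_⟩
    have hs : slope f 1 y = f y / (y - 1) := by rw [slope_def_field, hf1, sub_zero]
    rw [hs] at hy0
    have hfy : 0 < f y := by
      have h5 : 0 < y - 1 := by linarith
      have := mul_pos hy0 h5
      rwa [div_mul_cancel₀ _ (ne_of_gt h5)] at this
    rw [hf] at hfy
    simp only at hfy
    linarith
  have hx0 : (0 : ℝ) < x := by linarith
  have hxδ : (0 : ℝ) < x ^ δ := Real.rpow_pos_of_pos hx0 δ
  set s : ℝ := (p : ℝ) - 1 with hsdef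
  have hs0 : 0 ≤ s := by rw [hsdef]; linarith
  set c : ℝ := (1 + s * x) / ((p : ℝ) * x ^ δ) with hcdef
  have hc0 : 0 ≤ c := by
    apply div_nonneg
    · nlinarith
    · positivity
  have hc1 : c < 1 := by
    rw [hcdef, div_lt_one (by positivity)]
    linarith
  -- full binomial sum
  have hfull : ∀ (m : ℕ) (z : ℝ), 0 ≤ z →
      ∑ k ∈ Finset.range (m + 1), (Nat.choose m k : ℝ) * z ^ k = (z + 1) ^ m := by
    intro m z _
    rw [add_pow]
    refine Finset.sum_congr rfl (fun k _ => ?_)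
    rw [one_pow]
    ring
  -- cast of a m
  have hcast : ∀ m : ℕ, ((a m : ℝ))
      = ∑ k ∈ Finset.range (⌊δ * m⌋₊ + 1), (Nat.choose m k : ℝ) * s ^ k := by
    intro m
    rw [ha m]
    push_cast [Nat.cast_sub (by omega : 1 ≤ p)]
    rfl
  -- main bound
  have hbound : ∀ m : ℕ, (p : ℝ) ^ m - (a m : ℝ) ≤ c ^ m * (p : ℝ) ^ m ∧
      (a m : ℝ) ≤ (p : ℝ) ^ m := by
    intro m
    set t := ⌊δ * m⌋₊ with htdef
    have hsp : s + 1 = (p : ℝ) := by rw [hsdef]; ring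
    have hfullm : ∑ k ∈ Finset.range (m + 1), (Nat.choose m k : ℝ) * s ^ k = (p : ℝ) ^ m := by
      rw [hfull m s hs0, hsp]
    by_cases hm : m ≤ t
    · have hA : ((a m : ℝ)) = (p : ℝ) ^ m := by
        rw [hcast m, ← hfullm]
        symm
        refine Finset.sum_subset (Finset.range_subset_range.2 (by omega)) (fun k hk hnk => ?_)
        simp only [Finset.mem_range] at hk hnk
        have : m < k := by omega
        simp [Nat.choose_eq_zero_of_lt this]
      rw [hA]
      constructor
      · simp only [sub_self]
        positivity
      · exact le_refl _
    · push_neg at hm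
      have hsplit := Finset.sum_range_add_sum_Ico
        (fun k => (Nat.choose m k : ℝ) * s ^ k) (by omega : t + 1 ≤ m + 1)
      have htail : (p : ℝ) ^ m - (a m : ℝ)
          = ∑ k ∈ Finset.Ico (t + 1) (m + 1), (Nat.choose m k : ℝ) * s ^ k := by
        rw [hcast m, ← hfullm, ← hsplit]
        ring
      have htail_nonneg : 0 ≤ ∑ k ∈ Finset.Ico (t + 1) (m + 1),
          (Nat.choose m k : ℝ) * s ^ k :=
        Finset.sum_nonneg (fun k _ => by positivity)
      have hxdm : (0 : ℝ) < x ^ (δ * m) := Real.rpow_pos_of_pos hx0 _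
      have hstep : ∀ k ∈ Finset.Ico (t + 1) (m + 1),
          (Nat.choose m k : ℝ) * s ^ k
            ≤ (Nat.choose m k : ℝ) * (s * x) ^ k / x ^ (δ * m) := by
        intro k hk
        simp only [Finset.mem_Ico] at hk
        have hk1 : δ * m ≤ (k : ℝ) := by
          have h6 : ((t : ℝ)) + 1 ≤ (k : ℝ) := by exact_mod_cast hk.1
          have h7 := Nat.lt_floor_add_one (δ * m)
          rw [← htdef] at h7
          linarith
        have hxk : x ^ (δ * m) ≤ x ^ ((k : ℕ) : ℝ) :=
          Real.rpow_le_rpow_of_exponent_le (le_of_lt hx1) hk1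
        rw [Real.rpow_natCast] at hxk
        rw [le_div_iff₀ hxdm, mul_pow]
        calc (Nat.choose m k : ℝ) * s ^ k * x ^ (δ * m)
            ≤ (Nat.choose m k : ℝ) * s ^ k * x ^ k := by
              refine mul_le_mul_of_nonneg_left hxk (by positivity)
        _ = (Nat.choose m k : ℝ) * (s ^ k * x ^ k) := by ring
      have htail_le : ∑ k ∈ Finset.Ico (t + 1) (m + 1), (Nat.choose m k : ℝ) * s ^ k
          ≤ c ^ m * (p : ℝ) ^ m := by
        calc ∑ k ∈ Finset.Ico (t + 1) (m + 1), (Nat.choose m k : ℝ) * s ^ k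
            ≤ ∑ k ∈ Finset.Ico (t + 1) (m + 1),
              (Nat.choose m k : ℝ) * (s * x) ^ k / x ^ (δ * m) :=
              Finset.sum_le_sum hstep
        _ = (∑ k ∈ Finset.Ico (t + 1) (m + 1), (Nat.choose m k : ℝ) * (s * x) ^ k)
              / x ^ (δ * m) := by rw [← Finset.sum_div]
        _ ≤ (∑ k ∈ Finset.range (m + 1), (Nat.choose m k : ℝ) * (s * x) ^ k)
              / x ^ (δ * m) := by
              rw [div_le_div_iff_of_pos_right hxdm]
              refine Finset.sum_le_sum_of_subset_of_nonneg ?_ (fun k _ _ => by positivity)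
              intro k hk
              simp only [Finset.mem_Ico, Finset.mem_range] at hk ⊢
              omega
        _ = (s * x + 1) ^ m / x ^ (δ * m) := by
              rw [hfull m (s * x) (by positivity)]
        _ = c ^ m * (p : ℝ) ^ m := by
              have h9 : ((p : ℝ) * x ^ δ) ^ m = (p : ℝ) ^ m * x ^ (δ * m) := by
                rw [mul_pow, ← Real.rpow_natCast (x ^ δ) m,
                  ← Real.rpow_mul (le_of_lt hx0)]
              rw [hcdef, div_pow, h9, add_comm 1 (s * x)]
              have h10 : ((p : ℝ) ^ m) ≠ 0 := by positivity
              have h11 : x ^ (δ * m) ≠ 0 := ne_of_gt hxdm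
              field_simp
      constructor
      · rw [htail]
        exact htail_le
      · linarith [htail, htail_nonneg]
  have hppos : ∀ m : ℕ, (0 : ℝ) < (p : ℝ) ^ m := fun m => by positivity
  have h1 : ∀ m : ℕ, 1 - c ^ m ≤ (a m : ℝ) / (p : ℝ) ^ m := by
    intro m
    rw [le_div_iff₀ (hppos m)]
    have h12 := (hbound m).1
    have h13 : (1 - c ^ m) * (p : ℝ) ^ m = (p : ℝ) ^ m - c ^ m * (p : ℝ) ^ m := by ring
    linarith
  have h2 : ∀ m : ℕ, (a m : ℝ) / (p : ℝ) ^ m ≤ 1 := by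
    intro m
    rw [div_le_one (hppos m)]
    exact (hbound m).2
  have hc_to : Filter.Tendsto (fun m : ℕ => 1 - c ^ m) Filter.atTop (nhds 1) := by
    have h3 := tendsto_pow_atTop_nhds_zero_of_lt_one hc0 hc1
    have h4 := Filter.Tendsto.const_sub 1 h3
    simpa using h4
  exact tendsto_of_tendsto_of_tendsto_of_le_of_le hc_to tendsto_const_nhds
    (fun m => h1 m) (fun m => h2 m)

/-- Exact count and asymptotic for the set `U(m,δ)` of inputs whose first `m`
iterates under `C̃` have at most `δ m` nonzero residues mod `p`, on any interval
of length `p^m`. -/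
theorem stmt12 (p q : ℕ) (hp : 2 ≤ p) (hq : 2 ≤ q) (hpq : Nat.Coprime p q)
    (r : ℕ → ℤ) (hr1 : ∀ j, 1 ≤ j → j < p → 1 ≤ q * j + r j)
    (hr2 : ∀ j, 1 ≤ j → j < p → (p : ℤ) ∣ q * j + r j)
    (Ct : ℕ → ℕ)
    (hCt : ∀ N, Ct N = if N % p = 0 then N / p else ((q * N : ℤ) + r (N % p)).toNat / p)
    (δ : ℝ) (hδ : ((p : ℝ) - 1) / p < δ)
    (U : ℕ → ℕ → Finset ℕ)
    (hU : ∀ m M, U m M = (Finset.Ico M (p ^ m + M)).filter (fun N =>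
      (((Finset.range m).filter (fun k => Ct^[k] N % p ≠ 0)).card : ℝ) ≤ δ * m)) :
    (∀ m M : ℕ,
      (U m M).card = ∑ k ∈ Finset.range (⌊δ * m⌋₊ + 1), Nat.choose m k * (p - 1) ^ k) ∧
    (∀ M : ℕ → ℕ, Filter.Tendsto (fun m : ℕ => ((U m (M m)).card : ℝ) / (p : ℝ) ^ m)
      Filter.atTop (nhds 1)) := by
  have hinjCt := injCt p q hp hpq r hr1 hr2 Ct hCt
  have hpart1 : ∀ m M : ℕ,
      (U m M).card = ∑ k ∈ Finset.range (⌊δ * m⌋₊ + 1), Nat.choose m k * (p - 1) ^ k := by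
    intro m M
    rw [hU]
    exact stmt12_part1 p hp Ct δ hδ hinjCt m M
  refine ⟨hpart1, fun M => ?_⟩
  exact stmt12_part2 p hp δ hδ (fun m => (U m (M m)).card) (fun m => hpart1 m (M m))
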